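/- Let x ∈ P, let v be a minimizer of z ↦ ∇f(x)·z over P, and let v′ be a minimizer of z ↦ ∇f(x)·z over P′. Then for every z′ ∈ P′ one has f(x) − ∇f(x)·(x − v) + ∇f(x)·(v′ − v) ≤ f(z′); that is, f(x) − ∇f(x)·(x − v) + ∇f(x)·(v′ − v) ≤ min_{z ∈ P′} f(z). -/

import Mathlib

open scoped RealInnerProductSpace BigOperators Topology

lemma grad_ineq {E : Type*} [NormedAddCommGroup E] [InnerProductSpace ℝ E] [CompleteSpace E]
    {D : Set E} (f : E → ℝ) (hconv : ConvexOn ℝ D f)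
    {x y : E} (hx : x ∈ D) (hy : y ∈ D) {G : E}
    (hg : HasGradientAt f G x) : f x + ⟪G, y - x⟫ ≤ f y := by
  set φ : ℝ → ℝ := fun t => f (x + t • (y - x)) with hφdef
  have hline : HasDerivAt (fun t : ℝ => x + t • (y - x)) (y - x) 0 := by
    simpa using ((hasDerivAt_id (0:ℝ)).smul_const (y - x)).const_add x
  have hF : HasFDerivAt f (InnerProductSpace.toDual ℝ E G) x :=
    hasGradientAt_iff_hasFDerivAt.mp hg
  have hφ : HasDerivAt φ ⟪G, y - x⟫ 0 := by
    have hF' : HasFDerivAt f (InnerProductSpace.toDual ℝ E G)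
        ((fun t : ℝ => x + t • (y - x)) 0) := by simpa using hF
    have := hF'.comp_hasDerivAt 0 hline
    simp only [InnerProductSpace.toDual_apply_apply] at this
    exact this
  have key : ∀ t ∈ Set.Ioc (0:ℝ) 1, slope φ 0 t ≤ f y - f x := by
    intro t ht
    have hc : x + t • (y - x) = (1 - t) • x + t • y := by
      rw [smul_sub, sub_smul, one_smul]; abel
    have hb := hconv.2 hx hy (by linarith [ht.2] : (0:ℝ) ≤ 1 - t) (le_of_lt ht.1)
      (by ring)
    rw [← hc] at hb
    have hφ0 : φ 0 = f x := by simp [hφdef]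
    have hφt : φ t ≤ (1 - t) * f x + t * f y := by simpa [hφdef, smul_eq_mul] using hb
    rw [slope_def_field, sub_zero, div_le_iff₀ ht.1, hφ0]
    nlinarith [ht.1]
  have hsub : 𝓝[>] (0:ℝ) ≤ 𝓝[≠] (0:ℝ) :=
    nhdsWithin_mono _ (fun t ht => ne_of_gt ht)
  have h3 : Filter.Tendsto (slope φ 0) (𝓝[>] (0:ℝ)) (𝓝 ⟪G, y - x⟫) :=
    ((hasDerivAt_iff_tendsto_slope.mp hφ).mono_left hsub)
  have h4 : ⟪G, y - x⟫ ≤ f y - f x :=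
    le_of_tendsto h3 (Filter.eventually_of_mem
      (Ioc_mem_nhdsGT_of_mem ⟨le_refl _, zero_lt_one⟩) key)
  linarith

/-- For `x ∈ P`, `v` a Frank–Wolfe vertex at `x` over `P = {z : Az ≤ b}`
and `v′` a Frank–Wolfe vertex at `x` over `P′ = {z : Az ≤ b′}`, every `z′ ∈ P′`
satisfies `f(x) − ∇f(x)·(x − v) + ∇f(x)·(v′ − v) ≤ f(z′)`. -/
theorem stmt_2 {n m : ℕ}
    (A : Matrix (Fin m) (Fin n) ℝ) (b b' : Fin m → ℝ)
    (P P' : Set (EuclideanSpace ℝ (Fin n)))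
    (hP : P = {z : EuclideanSpace ℝ (Fin n) | ∀ i, (∑ j, A i j * z j) ≤ b i})
    (hP' : P' = {z : EuclideanSpace ℝ (Fin n) | ∀ i, (∑ j, A i j * z j) ≤ b' i})
    (hPne : P.Nonempty) (hPcpt : IsCompact P)
    (hP'ne : P'.Nonempty) (hP'cpt : IsCompact P')
    (D : Set (EuclideanSpace ℝ (Fin n)))
    (hDopen : IsOpen D) (hDconv : Convex ℝ D) (hPD : P ⊆ D) (hP'D : P' ⊆ D)
    (f : EuclideanSpace ℝ (Fin n) → ℝ)
    (g : EuclideanSpace ℝ (Fin n) → EuclideanSpace ℝ (Fin n))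
    (hconv : ConvexOn ℝ D f)
    (hgrad : ∀ y ∈ D, HasGradientAt f (g y) y)
    (x : EuclideanSpace ℝ (Fin n)) (hx : x ∈ P)
    (v : EuclideanSpace ℝ (Fin n)) (hv : v ∈ P)
    (hvmin : ∀ z ∈ P, ⟪g x, v⟫ ≤ ⟪g x, z⟫)
    (v' : EuclideanSpace ℝ (Fin n)) (hv' : v' ∈ P')
    (hv'min : ∀ z ∈ P', ⟪g x, v'⟫ ≤ ⟪g x, z⟫) :
    ∀ z' ∈ P', f x - ⟪g x, x - v⟫ + ⟪g x, v' - v⟫ ≤ f z' := by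
  intro z' hz'
  have hxD : x ∈ D := hPD hx
  have h1 : f x + ⟪g x, z' - x⟫ ≤ f z' :=
    grad_ineq f hconv hxD (hP'D hz') (hgrad x hxD)
  have h2 : ⟪g x, v'⟫ ≤ ⟪g x, z'⟫ := hv'min z' hz'
  simp only [inner_sub_right] at *
  linarith
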